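/- Let κ, c ∈ ℂ with c ≠ 0 and κ not zero or a negative integer, and suppose Re(κ+1) − (1/2)(e−1)|κ| ≥ |c|/4 + 1/2. Then the function z ↦ (2κ/(cz))(1 − 2z u'_{κ,c}(z) − u_{κ,c}(z)) for z ≠ 0, extended analytically with value 1 at z = 0, belongs to the class P_e (this function equals u_{κ+1,c}). -/

import Mathlib

open Complex Metric Set

noncomputable def poch (x : ℂ) (n : ℕ) : ℂ := ∏ k ∈ Finset.range n, (x + k)

/-- The class `P_e`: `p` is analytic on the unit disk, `p 0 = 1`, and `p` maps the
unit disk into `exp(𝔻)` (equivalently, `p` is subordinate to `exp`). -/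
def memPe (p : ℂ → ℂ) : Prop :=
  AnalyticOnNhd ℂ p (Metric.ball 0 1) ∧ p 0 = 1 ∧
    ∀ z ∈ Metric.ball (0:ℂ) 1, p z ∈ Complex.exp '' Metric.ball 0 1

/-- The class `K_e` of exponential convex functions. -/
def memKe (f : ℂ → ℂ) : Prop :=
  AnalyticOnNhd ℂ f (Metric.ball 0 1) ∧ f 0 = 0 ∧ deriv f 0 = 1 ∧
    (∀ z ∈ Metric.ball (0:ℂ) 1, deriv f z ≠ 0) ∧
    memPe (fun z => 1 + z * deriv (deriv f) z / deriv f z)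

/-- The class `S*_e` of exponential starlike functions. -/
def memSe (f : ℂ → ℂ) : Prop :=
  AnalyticOnNhd ℂ f (Metric.ball 0 1) ∧ f 0 = 0 ∧ deriv f 0 = 1 ∧
    (∀ z ∈ Metric.ball (0:ℂ) 1, z ≠ 0 → f z ≠ 0) ∧
    memPe (fun z => if z = 0 then 1 else z * deriv f z / f z)

/-- The normalized generalized Struve function of the first kind
`u_{κ,c}(z) = ∑_{n≥0} ((−c/4)^n / ((3/2)_n (κ)_n)) z^n`. -/
noncomputable def struveU (κ c : ℂ) (z : ℂ) : ℂ :=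
  ∑' n : ℕ, (-c / 4) ^ n / (poch (3/2) n * poch κ n) * z ^ n

namespace StruveAux

noncomputable def A (μ c : ℂ) (n : ℕ) : ℂ := (-c / 4) ^ n / (poch (3/2) n * poch μ n)

lemma struveU_eq (μ c z : ℂ) : struveU μ c z = ∑' n : ℕ, A μ c n * z ^ n := rfl

lemma poch_zero (x : ℂ) : poch x 0 = 1 := by simp [poch]

lemma poch_succ (x : ℂ) (n : ℕ) : poch x (n+1) = poch x n * (x + n) :=
  Finset.prod_range_succ _ _

lemma poch_succ' (x : ℂ) (n : ℕ) : poch x (n+1) = x * poch (x+1) n := by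
  induction n with
  | zero => simp [poch]
  | succ n ih =>
      rw [poch_succ, ih, poch_succ]
      push_cast
      ring

lemma norm_poch (x : ℂ) (n : ℕ) : ‖poch x n‖ = ∏ k ∈ Finset.range n, ‖x + (k:ℂ)‖ := by
  simp [poch]

lemma le_norm_poch {x : ℂ} (hx : 0 ≤ x.re) (n : ℕ) :
    ∏ k ∈ Finset.range n, (x.re + (k:ℝ)) ≤ ‖poch x n‖ := by
  rw [norm_poch]
  refine Finset.prod_le_prod (fun k _ => by positivity) (fun k _ => ?_)
  have : (x + (k:ℂ)).re = x.re + k := by simp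
  rw [← this]
  exact Complex.re_le_norm _

lemma poch_ne_zero {x : ℂ} (hx : ∀ k : ℕ, x + (k:ℂ) ≠ 0) (n : ℕ) : poch x n ≠ 0 :=
  Finset.prod_ne_zero_iff.2 fun k _ => hx k

lemma three_half_add_ne_zero : ∀ k : ℕ, (3/2 : ℂ) + (k:ℂ) ≠ 0 := by
  intro k hE
  have : ((3/2 : ℂ) + (k:ℂ)).re = 3/2 + k := by simp
  rw [hE] at this
  simp at this
  nlinarith [this, Nat.cast_nonneg (α := ℝ) k]

lemma A_succ (μ c : ℂ) (hμ : ∀ k : ℕ, μ + (k:ℂ) ≠ 0) (n : ℕ) :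
    A μ c (n+1) = A μ c n * ((-c/4) / (((3/2 : ℂ) + n) * (μ + n))) := by
  have h1 : poch (3/2) n ≠ 0 := poch_ne_zero three_half_add_ne_zero n
  have h2 : poch μ n ≠ 0 := poch_ne_zero hμ n
  have h3 : (3/2 : ℂ) + n ≠ 0 := three_half_add_ne_zero n
  have h4 : μ + (n:ℂ) ≠ 0 := hμ n
  unfold A
  rw [poch_succ, poch_succ, pow_succ]
  field_simp

lemma norm_neg_c_div_four (c : ℂ) : ‖(-c/4 : ℂ)‖ = ‖c‖ / 4 := by
  rw [norm_div, norm_neg]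
  norm_num

lemma re_le_norm (w : ℂ) : w.re ≤ ‖w‖ :=
  Complex.re_le_norm _

lemma summable_weight (μ c : ℂ) (hre : (-1:ℝ)/2 < μ.re) (hμ : ∀ k : ℕ, μ + (k:ℂ) ≠ 0)
    (R : ℝ) (hR : 0 ≤ R) :
    Summable (fun n : ℕ => ((n:ℝ)+1) * ‖A μ c n‖ * R ^ n) := by
  apply summable_of_ratio_norm_eventually_le (r := 1/2) (by norm_num)
  rw [Filter.eventually_atTop]
  refine ⟨⌈‖c‖ * R⌉₊ + 1, fun n hn => ?_⟩
  have hn1 : (1:ℝ) ≤ n := by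
    have : 1 ≤ n := le_trans (Nat.le_add_left 1 _) hn
    exact_mod_cast this
  have hcR : ‖c‖ * R ≤ (n:ℝ) := le_trans (Nat.le_ceil _) (by exact_mod_cast Nat.le_of_succ_le hn)
  have hc0 : (0:ℝ) ≤ ‖c‖ * R := by positivity
  set D1 := ‖(3/2 : ℂ) + (n:ℂ)‖ with hD1def
  set D2 := ‖μ + (n:ℂ)‖ with hD2def
  have hD1 : (3:ℝ)/2 + n ≤ D1 := by
    have := re_le_norm ((3/2 : ℂ) + (n:ℂ))
    simpa using this
  have hD2 : (n:ℝ) - 1/2 ≤ D2 := by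
    have := re_le_norm (μ + (n:ℂ))
    simp only [Complex.add_re, Complex.natCast_re] at this
    linarith
  have hD1p : (0:ℝ) < D1 := by linarith
  have hD2p : (0:ℝ) < D2 := by linarith
  have eA : ‖A μ c (n+1)‖ = ‖A μ c n‖ * ((‖c‖/4) / (D1 * D2)) := by
    rw [A_succ μ c hμ n, norm_mul, norm_div, norm_mul, norm_neg_c_div_four]
  have hprod : ((n:ℝ)+3/2) * ((n:ℝ)-1/2) ≤ D1 * D2 := by
    apply mul_le_mul (by linarith) hD2 (by linarith) (by linarith)
  have key : ((n:ℝ)+2) * ((‖c‖/4) * R) ≤ ((n:ℝ)+1)/2 * (D1 * D2) := by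
    have step : ((n:ℝ)+2) * ((‖c‖/4) * R) ≤ ((n:ℝ)+1)/2 * (((n:ℝ)+3/2) * ((n:ℝ)-1/2)) := by
      nlinarith [sq_nonneg ((n:ℝ)-1), sq_nonneg (n:ℝ), hn1, hcR, hc0]
    refine step.trans ?_
    have : (0:ℝ) ≤ ((n:ℝ)+1)/2 := by linarith
    nlinarith [hprod]
  have hAn : (0:ℝ) ≤ ‖A μ c n‖ := norm_nonneg _
  have hRn : (0:ℝ) ≤ R ^ n := by positivity
  rw [Real.norm_of_nonneg (by positivity), Real.norm_of_nonneg (by positivity)]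
  push_cast
  calc ((n:ℝ)+1+1) * ‖A μ c (n+1)‖ * R ^ (n+1)
      = (((n:ℝ)+2) * ((‖c‖/4) * R)) * (‖A μ c n‖ * R ^ n) / (D1 * D2) := by
        rw [eA, pow_succ]; ring
    _ ≤ ((((n:ℝ)+1)/2) * (D1 * D2)) * (‖A μ c n‖ * R ^ n) / (D1 * D2) := by
        gcongr
    _ = 1/2 * (((n:ℝ)+1) * ‖A μ c n‖ * R ^ n) := by
        field_simp

variable {μ c : ℂ} (hre : (-1:ℝ)/2 < μ.re) (hμ : ∀ k : ℕ, μ + (k:ℂ) ≠ 0)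

include hre hμ in
lemma summable_term (z : ℂ) (w : ℝ) :
    Summable (fun n : ℕ => ((w * n + 1 : ℝ) : ℂ) * (A μ c n * z ^ n)) := by
  have base := summable_weight μ c hre hμ ‖z‖ (norm_nonneg z)
  set M := max |w| 1 with hM
  have hM1 : (1:ℝ) ≤ M := le_max_right _ _
  apply Summable.of_norm_bounded (base.mul_left M)
  intro n
  rw [norm_mul, norm_mul, norm_pow]
  have h1 : ‖((w * n + 1 : ℝ) : ℂ)‖ = |w * n + 1| := Complex.norm_real _
  rw [h1]
  have h2 : |w * n + 1| ≤ M * ((n:ℝ)+1) := by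
    have : |w * n + 1| ≤ |w| * n + 1 := by
      calc |w * n + 1| ≤ |w * n| + 1 := by simpa using abs_add_le (w * n) 1
        _ = |w| * n + 1 := by rw [abs_mul, Nat.abs_cast]
    refine this.trans ?_
    nlinarith [le_max_left |w| 1, abs_nonneg w, Nat.cast_nonneg (α := ℝ) n]
  calc |w * n + 1| * (‖A μ c n‖ * ‖z‖ ^ n) ≤ (M * ((n:ℝ)+1)) * (‖A μ c n‖ * ‖z‖ ^ n) := by
        gcongr
    _ = M * (((n:ℝ)+1) * ‖A μ c n‖ * ‖z‖ ^ n) := by ring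

set_option maxHeartbeats 1000000 in
include hre hμ in
lemma hasDerivAt_struveU (z : ℂ) :
    HasDerivAt (struveU μ c) (∑' n : ℕ, A μ c n * ((n:ℂ) * z ^ (n-1))) z := by
  obtain ⟨R, hRpos, hzR⟩ : ∃ R : ℝ, 0 < R ∧ ‖z‖ < R := ⟨‖z‖ + 1, by positivity, by linarith⟩
  have hRne : R ≠ 0 := ne_of_gt hRpos
  have hu : Summable (fun n : ℕ => (n:ℝ) * ‖A μ c n‖ * R ^ (n-1)) := by
    rw [← summable_nat_add_iff 1]
    have base := summable_weight μ c hre hμ R (le_of_lt hRpos)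
    have base1 : Summable (fun n : ℕ => (((n+1:ℕ):ℝ)+1) * ‖A μ c (n+1)‖ * R ^ (n+1)) :=
      (summable_nat_add_iff 1).2 base
    apply Summable.of_norm_bounded (base1.mul_right (1/R))
    intro n
    simp only [Nat.add_sub_cancel]
    rw [Real.norm_of_nonneg (by positivity)]
    have : (((n+1:ℕ):ℝ)+1) * ‖A μ c (n+1)‖ * R ^ (n+1) * (1/R)
        = (((n:ℝ)+2)) * ‖A μ c (n+1)‖ * R ^ n := by
      rw [pow_succ]
      push_cast
      field_simp
      ring
    rw [this]
    push_cast
    gcongr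
    linarith
  have key := hasDerivAt_tsum_of_isPreconnected hu (isOpen_ball (x := (0:ℂ)) (ε := R))
    (convex_ball (0:ℂ) R).isPreconnected
    (g := fun n w => A μ c n * w ^ n)
    (g' := fun n w => A μ c n * ((n:ℂ) * w ^ (n-1)))
    (fun n y _ => (hasDerivAt_pow n y).const_mul (A μ c n))
    (fun n y hy => ?_) (mem_ball_self hRpos) ?_ (by simpa using hzR)
  · exact key
  · rw [norm_mul, norm_mul, norm_pow, Complex.norm_natCast]
    have hyR : ‖y‖ ≤ R := le_of_lt (by simpa using hy)
    calc ‖A μ c n‖ * ((n:ℝ) * ‖y‖ ^ (n-1)) ≤ ‖A μ c n‖ * ((n:ℝ) * R ^ (n-1)) := by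
          gcongr
      _ = (n:ℝ) * ‖A μ c n‖ * R ^ (n-1) := by ring
  · have := summable_term (c := c) hre hμ (0:ℂ) 0
    simpa using this

lemma A_zero (μ c : ℂ) : A μ c 0 = 1 := by simp [A, poch_zero]

lemma struveU_zero {μ c : ℂ} : struveU μ c 0 = 1 := by
  rw [struveU_eq, tsum_eq_single 0 (fun n hn => by simp [zero_pow hn])]
  simp [A_zero]

lemma key_coeff {κ : ℂ} (c : ℂ) (hκ0 : κ ≠ 0) (hκ1 : ∀ k : ℕ, κ + 1 + (k:ℂ) ≠ 0) (n : ℕ) :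
    (2*(n:ℂ)+3) * A κ c (n+1) = -(c/(2*κ)) * A (κ+1) c n := by
  have h1 : poch (3/2) n ≠ 0 := poch_ne_zero three_half_add_ne_zero n
  have h2 : poch (κ+1) n ≠ 0 := poch_ne_zero hκ1 n
  have h3 : (3/2 : ℂ) + n ≠ 0 := three_half_add_ne_zero n
  have h5 : (2*(n:ℂ)+3) ≠ 0 := by
    have : ((2*n+3 : ℕ) : ℂ) ≠ 0 := Nat.cast_ne_zero.2 (by omega)
    convert this using 1
    push_cast
    ring
  have h23 : ((3:ℂ)/2 + (n:ℂ)) = (2*(n:ℂ)+3)/2 := by ring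
  unfold A
  rw [poch_succ (3/2) n, poch_succ' κ n, pow_succ, h23]
  field_simp
  ring

section Recurrence

variable {κ : ℂ} (hc : c ≠ 0) (hκ0 : κ ≠ 0)
  (hreκ : (-1:ℝ)/2 < κ.re) (hμκ : ∀ k : ℕ, κ + (k:ℂ) ≠ 0)
  (hμκ1 : ∀ k : ℕ, κ + 1 + (k:ℂ) ≠ 0)

include hc hκ0 hreκ hμκ hμκ1 in
lemma recurrence (z : ℂ) (hz : z ≠ 0) :
    2 * κ / (c * z) * (1 - 2 * z * deriv (struveU κ c) z - struveU κ c z) =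
      struveU (κ + 1) c z := by
  have hderiv : deriv (struveU κ c) z = ∑' n : ℕ, A κ c n * ((n:ℂ) * z ^ (n-1)) :=
    (hasDerivAt_struveU hreκ hμκ z).deriv
  have S1 : Summable (fun n : ℕ => A κ c n * z ^ n) := by
    have := summable_term (c := c) hreκ hμκ z 0
    exact this.congr fun n => by push_cast; ring
  have e2z : 2 * z * deriv (struveU κ c) z = ∑' n : ℕ, 2 * (n:ℂ) * A κ c n * z ^ n := by
    rw [hderiv, ← tsum_mul_left]
    refine tsum_congr fun n => ?_
    cases n with
    | zero => simp
    | succ m => simp only [pow_succ]; push_cast; ring_nf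
  have ecomb : 2 * z * deriv (struveU κ c) z + struveU κ c z
      = ∑' n : ℕ, (2*(n:ℂ)+1) * (A κ c n * z ^ n) := by
    rw [e2z, struveU_eq]
    have S2' : Summable (fun n : ℕ => (2*(n:ℂ)) * A κ c n * z ^ n) := by
      refine ((summable_term (c := c) hreκ hμκ z 2).sub
        (summable_term (c := c) hreκ hμκ z 0)).congr fun n => ?_
      push_cast; ring
    rw [← Summable.tsum_add S2' S1]
    exact tsum_congr fun n => by ring
  have S3 : Summable (fun n : ℕ => (2*(n:ℂ)+1) * (A κ c n * z ^ n)) := by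
    refine (summable_term (c := c) hreκ hμκ z 2).congr fun n => ?_
    push_cast; ring
  have esplit : ∑' n : ℕ, (2*(n:ℂ)+1) * (A κ c n * z ^ n)
      = 1 + ∑' n : ℕ, (2*((n:ℕ):ℂ)+3) * (A κ c (n+1) * z ^ (n+1)) := by
    rw [Summable.tsum_eq_zero_add S3]
    congr 1
    · simp [A_zero]
    · exact tsum_congr fun n => by push_cast; ring
  have etail : ∑' n : ℕ, (2*((n:ℕ):ℂ)+3) * (A κ c (n+1) * z ^ (n+1))
      = -(c * z/(2*κ)) * struveU (κ+1) c z := by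
    rw [struveU_eq, ← tsum_mul_left]
    refine tsum_congr fun n => ?_
    have hkc := key_coeff c hκ0 hμκ1 n
    calc (2*((n:ℕ):ℂ)+3) * (A κ c (n+1) * z ^ (n+1))
        = ((2*((n:ℕ):ℂ)+3) * A κ c (n+1)) * z ^ (n+1) := by ring
      _ = (-(c/(2*κ)) * A (κ+1) c n) * z ^ (n+1) := by rw [hkc]
      _ = -(c * z/(2*κ)) * (A (κ+1) c n * z ^ n) := by rw [pow_succ]; ring
  have main : 1 - 2 * z * deriv (struveU κ c) z - struveU κ c z
      = (c * z/(2*κ)) * struveU (κ+1) c z := by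
    have hrw : 1 - 2 * z * deriv (struveU κ c) z - struveU κ c z
        = 1 - (2 * z * deriv (struveU κ c) z + struveU κ c z) := by ring
    rw [hrw, ecomb, esplit, etail]
    ring
  rw [main]
  have h2κ : (2:ℂ) * κ ≠ 0 := by simp [hκ0]
  field_simp

end Recurrence

lemma prod32 (n : ℕ) : (3/2:ℝ) * (5/2)^n ≤ ∏ k ∈ Finset.range (n+1), (3/2 + (k:ℝ)) := by
  induction n with
  | zero => simp
  | succ n ih =>
      rw [Finset.prod_range_succ]
      have h1 : (5/2 : ℝ) ≤ 3/2 + ((n+1 : ℕ):ℝ) := by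
        push_cast; linarith [Nat.cast_nonneg (α := ℝ) n]
      have h2 : (0:ℝ) < (3/2:ℝ) * (5/2)^n := by positivity
      calc (3/2:ℝ) * (5/2)^(n+1) = ((3/2:ℝ) * (5/2)^n) * (5/2) := by ring
        _ ≤ (∏ k ∈ Finset.range (n+1), (3/2 + (k:ℝ))) * (3/2 + ((n+1:ℕ):ℝ)) := by
            apply mul_le_mul ih h1 (by norm_num) (le_trans (le_of_lt h2) ih)

lemma prodA {a : ℝ} (ha : 0 < a) (n : ℕ) :
    a^(n+1) ≤ ∏ k ∈ Finset.range (n+1), (a + (k:ℝ)) := by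
  calc a^(n+1) = ∏ _k ∈ Finset.range (n+1), a := by
        rw [Finset.prod_const, Finset.card_range]
    _ ≤ ∏ k ∈ Finset.range (n+1), (a + (k:ℝ)) := by
        apply Finset.prod_le_prod (fun k _ => le_of_lt ha)
          (fun k _ => by linarith [Nat.cast_nonneg (α := ℝ) k])

omit hre hμ in
lemma mem_expball (hc : c ≠ 0) (hre : 0 < μ.re) (hμ : ∀ k : ℕ, μ + (k:ℂ) ≠ 0)
    (hd : 2 * Real.exp 1 * (‖c‖/4) ≤ 3 * μ.re) (z : ℂ) (hz : ‖z‖ < 1) :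
    struveU μ c z ∈ Complex.exp '' Metric.ball 0 1 := by
  obtain ⟨a, hadef⟩ : ∃ a : ℝ, a = μ.re := ⟨_, rfl⟩
  obtain ⟨d, hddef⟩ : ∃ d : ℝ, d = ‖c‖/4 := ⟨_, rfl⟩
  rw [← hadef, ← hddef] at hd
  have hE1 : (2.7182818283 : ℝ) < Real.exp 1 := Real.exp_one_gt_d9
  have ha : 0 < a := hadef ▸ hre
  have hd0 : 0 < d := by
    have : 0 < ‖c‖ := norm_pos_iff.2 hc
    rw [hddef]; positivity
  obtain ⟨q, hqdef⟩ : ∃ q : ℝ, q = 2*d/(5*a) := ⟨_, rfl⟩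
  have hq0 : 0 ≤ q := by rw [hqdef]; positivity
  have h26 : 26 * d ≤ 15 * a := by nlinarith
  have hq1 : q < 1 := by
    rw [hqdef, div_lt_one (by positivity)]
    nlinarith
  have hterm : ∀ n : ℕ, ‖A μ c (n+1) * z ^ (n+1)‖ ≤ (2*d/(3*a)) * q^n := by
    intro n
    have hz1 : ‖z ^ (n+1)‖ ≤ 1 := by
      rw [norm_pow]
      exact pow_le_one₀ (norm_nonneg z) (le_of_lt hz)
    have hP1 : (3/2:ℝ) * (5/2)^n ≤ ‖poch (3/2) (n+1)‖ := by
      refine le_trans (prod32 n) ?_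
      have h32 : ((3:ℂ)/2).re = 3/2 := by norm_num
      have := le_norm_poch (x := (3/2:ℂ)) (by rw [h32]; norm_num) (n+1)
      rw [h32] at this
      exact this
    have hP2 : a^(n+1) ≤ ‖poch μ (n+1)‖ := by
      refine le_trans (prodA ha n) ?_
      rw [hadef]
      exact le_norm_poch (le_of_lt hre) (n+1)
    have hnormA : ‖A μ c (n+1)‖ = d^(n+1) / (‖poch (3/2) (n+1)‖ * ‖poch μ (n+1)‖) := by
      rw [A, norm_div, norm_mul, norm_pow, norm_neg_c_div_four, hddef]
    have hden : ((3/2:ℝ) * (5/2)^n) * a^(n+1) ≤ ‖poch (3/2) (n+1)‖ * ‖poch μ (n+1)‖ := by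
      apply mul_le_mul hP1 hP2 (by positivity) (norm_nonneg _)
    have hkey : ‖A μ c (n+1)‖ ≤ d^(n+1) / (((3/2:ℝ) * (5/2)^n) * a^(n+1)) := by
      rw [hnormA]
      exact div_le_div_of_nonneg_left (by positivity) (by positivity) hden
    have heq : d^(n+1) / (((3/2:ℝ) * (5/2)^n) * a^(n+1)) = (2*d/(3*a)) * q^n := by
      rw [hqdef, div_pow (2*d) (5*a), mul_pow (2:ℝ) d, mul_pow (5:ℝ) a, div_pow (5:ℝ) 2, pow_succ d, pow_succ a]
      field_simp
    calc ‖A μ c (n+1) * z ^ (n+1)‖ = ‖A μ c (n+1)‖ * ‖z ^ (n+1)‖ := norm_mul _ _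
      _ ≤ (d^(n+1) / (((3/2:ℝ) * (5/2)^n) * a^(n+1))) * 1 := by
          apply mul_le_mul hkey hz1 (norm_nonneg _) (by positivity)
      _ = (2*d/(3*a)) * q^n := by rw [mul_one, heq]
  have hgeom : Summable (fun n : ℕ => (2*d/(3*a)) * q^n) :=
    (summable_geometric_of_lt_one hq0 hq1).mul_left _
  have hsumnorm : Summable (fun n : ℕ => ‖A μ c (n+1) * z ^ (n+1)‖) :=
    Summable.of_nonneg_of_le (fun n => norm_nonneg _) hterm hgeom
  have hre' : (-1:ℝ)/2 < μ.re := by linarith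
  have S1 : Summable (fun n : ℕ => A μ c n * z ^ n) := by
    have := summable_term (c := c) hre' hμ z 0
    exact this.congr fun n => by push_cast; ring
  have hv : struveU μ c z - 1 = ∑' n : ℕ, A μ c (n+1) * z ^ (n+1) := by
    rw [struveU_eq, Summable.tsum_eq_zero_add S1]
    simp [A_zero]
  have hvbound : ‖struveU μ c z - 1‖ ≤ 1/2 := by
    rw [hv]
    have step1 : ‖∑' n : ℕ, A μ c (n+1) * z ^ (n+1)‖ ≤ ∑' n : ℕ, ‖A μ c (n+1) * z ^ (n+1)‖ :=
      norm_tsum_le_tsum_norm hsumnorm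
    have step2 : ∑' n : ℕ, ‖A μ c (n+1) * z ^ (n+1)‖ ≤ ∑' n : ℕ, (2*d/(3*a)) * q^n :=
      Summable.tsum_le_tsum hterm hsumnorm hgeom
    have step3 : ∑' n : ℕ, (2*d/(3*a)) * q^n = (2*d/(3*a)) * (1-q)⁻¹ := by
      rw [tsum_mul_left, tsum_geometric_of_lt_one hq0 hq1]
    have hx : d/a ≤ 15/26 := by rw [div_le_iff₀ ha]; linarith
    have step4 : (2*d/(3*a)) * (1-q)⁻¹ ≤ 1/2 := by
      have h1mq : 0 < 1 - q := by linarith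
      have e1 : 2*d/(3*a) = (2/3)*(d/a) := by field_simp
      have e2 : q = (2/5)*(d/a) := by rw [hqdef]; field_simp
      have key : 2*d/(3*a) ≤ 1/2 * (1-q) := by rw [e1, e2]; linarith
      calc (2*d/(3*a)) * (1-q)⁻¹ ≤ (1/2 * (1-q)) * (1-q)⁻¹ :=
            mul_le_mul_of_nonneg_right key (by positivity)
        _ = 1/2 := by
          rw [mul_comm (1/2) (1-q), mul_assoc, mul_comm (1/2 : ℝ) ((1-q)⁻¹),
            ← mul_assoc (1-q), mul_inv_cancel₀ (ne_of_gt h1mq), one_mul]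
    linarith [step1.trans (step2.trans (le_of_eq step3)), step4]
  have hne : struveU μ c z ≠ 0 := by
    intro h0
    rw [h0] at hvbound
    simp at hvbound
    linarith
  refine ⟨Complex.log (struveU μ c z), ?_, Complex.exp_log hne⟩
  rw [mem_ball, dist_zero_right]
  have hrepr : struveU μ c z = 1 + (struveU μ c z - 1) := by ring
  calc ‖Complex.log (struveU μ c z)‖
      = ‖Complex.log (1 + (struveU μ c z - 1))‖ := by rw [← hrepr]
    _ ≤ 3/2 * ‖struveU μ c z - 1‖ := Complex.norm_log_one_add_half_le_self hvbound
    _ ≤ 3/2 * (1/2) := by linarith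
    _ < 1 := by norm_num

end StruveAux

open StruveAux in
theorem struve_recurrence_memPe (κ c : ℂ) (hc : c ≠ 0) (hκ : ∀ n : ℕ, κ ≠ -(n : ℂ))
    (h : (κ + 1).re - (1 / 2) * (Real.exp 1 - 1) * ‖κ‖ ≥
      ‖c‖ / 4 + 1 / 2) :
    memPe (fun z => if z = 0 then 1 else
      2 * κ / (c * z) * (1 - 2 * z * deriv (struveU κ c) z - struveU κ c z)) ∧
    ∀ z : ℂ, z ≠ 0 →
      2 * κ / (c * z) * (1 - 2 * z * deriv (struveU κ c) z - struveU κ c z) =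
        struveU (κ + 1) c z := by
  -- basic nonvanishing facts
  have hκ0 : κ ≠ 0 := by simpa using hκ 0
  have hμκ : ∀ k : ℕ, κ + (k:ℂ) ≠ 0 := by
    intro k hE
    exact hκ k (by linear_combination hE)
  have hμκ1 : ∀ k : ℕ, κ + 1 + (k:ℂ) ≠ 0 := by
    intro k hE
    exact hκ (k+1) (by push_cast; linear_combination hE)
  -- real estimates
  have hE1 : (2.7182818283 : ℝ) < Real.exp 1 := Real.exp_one_gt_d9
  have hE2 : Real.exp 1 < 2.7182818286 := Real.exp_one_lt_d9
  have hm0 : 0 ≤ ‖κ‖ := norm_nonneg _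
  have hmre : |κ.re| ≤ ‖κ‖ := Complex.abs_re_le_norm κ
  have hm1 : κ.re ≤ ‖κ‖ := le_trans (le_abs_self _) hmre
  have hm2 : -κ.re ≤ ‖κ‖ := le_trans (neg_le_abs _) hmre
  have hd'0 : 0 < ‖c‖ := norm_pos_iff.2 hc
  have hre1κ : (κ + 1).re = κ.re + 1 := by simp
  have ha1 : 1/2 < (κ + 1).re := by
    nlinarith [mul_nonneg (by nlinarith : (0:ℝ) ≤ Real.exp 1 - 1) hm0]
  have hreκ : (-1:ℝ)/2 < κ.re := by rw [hre1κ] at ha1; linarith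
  have hreκ1 : (0:ℝ) < (κ+1).re := by linarith
  have hnormc : ‖c‖ = ‖c‖ := rfl
  have hd : 2 * Real.exp 1 * (‖c‖/4) ≤ 3 * (κ+1).re := by
    rw [hnormc]
    set E := Real.exp 1
    set m := ‖κ‖
    set a1 := (κ + 1).re
    have hκre : κ.re = a1 - 1 := by rw [hre1κ]; ring
    rw [hκre] at hm1 hm2
    rcases le_or_gt 1 a1 with hcase | hcase
    · nlinarith [mul_nonneg (by nlinarith : (0:ℝ) ≤ E*(E-1)) (by linarith : (0:ℝ) ≤ m - (a1-1)),
        mul_nonneg (by nlinarith [sq_nonneg (E - 3/2)] : (0:ℝ) ≤ E*E + 3 - 3*E)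
          (by linarith : (0:ℝ) ≤ a1 - 1)]
    · nlinarith [mul_nonneg (by nlinarith : (0:ℝ) ≤ E*(E-1)) (by linarith : (0:ℝ) ≤ m - (1-a1)),
        mul_nonneg (by nlinarith : (0:ℝ) ≤ E*E + E - 3) (by linarith : (0:ℝ) ≤ 1 - a1)]
  -- the recurrence
  have hrec : ∀ z : ℂ, z ≠ 0 →
      2 * κ / (c * z) * (1 - 2 * z * deriv (struveU κ c) z - struveU κ c z) =
        struveU (κ + 1) c z :=
    fun z hz => recurrence hc hκ0 hreκ hμκ hμκ1 z hz
  refine ⟨?_, hrec⟩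
  have hfun : (fun z => if z = 0 then (1:ℂ) else
      2 * κ / (c * z) * (1 - 2 * z * deriv (struveU κ c) z - struveU κ c z))
      = struveU (κ + 1) c := by
    funext z
    by_cases hz : z = 0
    · rw [if_pos hz, hz, struveU_zero]
    · rw [if_neg hz]
      exact hrec z hz
  rw [hfun]
  have hreκ1' : (-1:ℝ)/2 < (κ+1).re := by linarith
  have hdiff : Differentiable ℂ (struveU (κ+1) c) :=
    fun z => (hasDerivAt_struveU hreκ1' hμκ1 z).differentiableAt
  refine ⟨(hdiff.differentiableOn).analyticOnNhd isOpen_ball, struveU_zero, ?_⟩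
  intro z hz
  exact mem_expball hc hreκ1 hμκ1 hd z (mem_ball_zero_iff.1 hz)
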